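/- arXiv:2312.17327 — 2 statements merged into one kernel-verified Lean document; each statement's English description precedes it below -/
import Mathlib

section
/- In a cactus digraph, a vertex v is a connecting point (i.e., shared by two or more distinct simple cycles) if and only if δ⁻(v) = δ⁺(v) ≥ 2. -/
structure DirGraph (V : Type) where
  Adj : V → V → Prop
  loopless : ∀ v, ¬ Adj v v

namespace DirGraph

variable {V V' : Type}

/-- A walk is a nonempty list of vertices with consecutive arcs. -/
def IsWalk (G : DirGraph V) : List V → Prop
  | [] => False
  | [_] => True
  | a :: b :: l => G.Adj a b ∧ G.IsWalk (b :: l)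

def IsWalkFromTo (G : DirGraph V) (p : List V) (x y : V) : Prop :=
  G.IsWalk p ∧ p.head? = some x ∧ p.getLast? = some y

def StronglyConnected (G : DirGraph V) : Prop :=
  ∀ x y : V, ∃ p, G.IsWalkFromTo p x y

def IsSimplePath (G : DirGraph V) (p : List V) : Prop :=
  G.IsWalk p ∧ p.Nodup

def IsSimplePathFromTo (G : DirGraph V) (p : List V) (x y : V) : Prop :=
  G.IsSimplePath p ∧ p.head? = some x ∧ p.getLast? = some y

/-- The arcs of a walk given as a list of vertices. -/
def arcs (p : List V) : List (V × V) := p.zip p.tail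

/-- The preterminal (second-to-last) vertex of a path. -/
def preterminal (p : List V) : Option V := p.dropLast.getLast?

/-- A simple cycle: a closed walk whose vertices are distinct except for the
repeated endpoint. -/
def IsSimpleCycle (G : DirGraph V) (p : List V) : Prop :=
  G.IsWalk p ∧ 2 ≤ p.length ∧ p.head? = p.getLast? ∧ p.dropLast.Nodup

/-- Two cycles are equal as cycles when they have the same set of arcs. -/
def CycleEquiv (p q : List V) : Prop :=
  ∀ a : V × V, a ∈ arcs p ↔ a ∈ arcs q

/-- Each arc lies in exactly one simple cycle (up to arc-set equality). -/
def CactusArcCond (G : DirGraph V) : Prop :=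
  ∀ x y, G.Adj x y →
    (∃ p, G.IsSimpleCycle p ∧ (x, y) ∈ arcs p) ∧
    (∀ p q, G.IsSimpleCycle p → (x, y) ∈ arcs p →
      G.IsSimpleCycle q → (x, y) ∈ arcs q → CycleEquiv p q)

/-- A cactus digraph: strongly connected and each arc lies in exactly one
simple cycle. -/
def IsCactus (G : DirGraph V) : Prop :=
  G.StronglyConnected ∧ G.CactusArcCond

noncomputable def inDeg (G : DirGraph V) (v : V) : ℕ := Nat.card {u // G.Adj u v}
noncomputable def outDeg (G : DirGraph V) (v : V) : ℕ := Nat.card {u // G.Adj v u}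

/-- A connecting point: a vertex shared by two distinct simple cycles. -/
def IsConnectingPoint (G : DirGraph V) (v : V) : Prop :=
  ∃ p q, G.IsSimpleCycle p ∧ G.IsSimpleCycle q ∧ ¬ CycleEquiv p q ∧ v ∈ p ∧ v ∈ q

/-- An expansion of digraphs. -/
structure IsExpansion (G' : DirGraph V') (G : DirGraph V) (φ : V' → V) : Prop where
  map_adj : ∀ ⦃x y⦄, G'.Adj x y → G.Adj (φ x) (φ y)
  vert_surj : Function.Surjective φ
  arc_surj : ∀ ⦃x y⦄, G.Adj x y → ∃ x' y', G'.Adj x' y' ∧ φ x' = x ∧ φ y' = y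
  lift : ∀ ⦃x y⦄, G.Adj x y → ∀ y', φ y' = y → ∃! x', G'.Adj x' y' ∧ φ x' = x

/-- A doubly bidirectionally connected pair. -/
def Dbcp (G : DirGraph V) (p q : V) : Prop :=
  p ≠ q ∧
  (∃ P Q, G.IsSimplePathFromTo P p q ∧ G.IsSimplePathFromTo Q p q ∧
    preterminal P ≠ preterminal Q) ∧
  (∃ P Q, G.IsSimplePathFromTo P q p ∧ G.IsSimplePathFromTo Q q p ∧
    preterminal P ≠ preterminal Q)

/-- Subgraph of a digraph: a vertex subset together with a subrelation of arcs
supported on it. -/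
structure Subgraph (G : DirGraph V) where
  verts : Set V
  Adj : V → V → Prop
  adj_sub : ∀ ⦃x y⦄, Adj x y → G.Adj x y
  mem_left : ∀ ⦃x y⦄, Adj x y → x ∈ verts
  mem_right : ∀ ⦃x y⦄, Adj x y → y ∈ verts

def Subgraph.toDirGraph {G : DirGraph V} (H : Subgraph G) : DirGraph V :=
  ⟨H.Adj, fun v h => G.loopless v (H.adj_sub h)⟩

/-- A sub-cactus digraph: a nonempty subgraph that is strongly connected (on
its vertex set) and in which each arc lies in exactly one simple cycle. -/
def Subgraph.IsCactus {G : DirGraph V} (H : Subgraph G) : Prop :=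
  H.verts.Nonempty ∧
  (∀ x ∈ H.verts, ∀ y ∈ H.verts, ∃ p, H.toDirGraph.IsWalkFromTo p x y) ∧
  H.toDirGraph.CactusArcCond

def Subgraph.inter {G : DirGraph V} (H K : Subgraph G) : Subgraph G where
  verts := H.verts ∩ K.verts
  Adj x y := H.Adj x y ∧ K.Adj x y
  adj_sub := fun _ _ h => H.adj_sub h.1
  mem_left := fun _ _ h => ⟨H.mem_left h.1, K.mem_left h.2⟩
  mem_right := fun _ _ h => ⟨H.mem_right h.1, K.mem_right h.2⟩

def Subgraph.le {G : DirGraph V} (H K : Subgraph G) : Prop :=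
  H.verts ⊆ K.verts ∧ ∀ ⦃x y⦄, H.Adj x y → K.Adj x y

/-- The single-vertex subgraph. -/
def singleVert (G : DirGraph V) (v : V) : Subgraph G where
  verts := {v}
  Adj _ _ := False
  adj_sub := by intro _ _ h; exact h.elim
  mem_left := by intro _ _ h; exact h.elim
  mem_right := by intro _ _ h; exact h.elim

/-- The intersection of all sub-cactus digraphs of `G` containing `W`. -/
def CsubOf (G : DirGraph V) (W : Set V) : Subgraph G where
  verts := {x | ∀ H : Subgraph G, H.IsCactus → W ⊆ H.verts → x ∈ H.verts}
  Adj x y := G.Adj x y ∧ ∀ H : Subgraph G, H.IsCactus → W ⊆ H.verts → H.Adj x y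
  adj_sub := fun _ _ h => h.1
  mem_left := fun _ _ h H hH hW => H.mem_left (h.2 H hH hW)
  mem_right := fun _ _ h H hH hW => H.mem_right (h.2 H hH hW)

open Classical in
/-- `C G r v`: the minimum sub-cactus digraph containing `{r, v}` (and the
single vertex `{r}` when `v = r`). -/
noncomputable def C (G : DirGraph V) (r v : V) : Subgraph G :=
  if v = r then singleVert G r else CsubOf G {r, v}

/-- The preorder on vertices of the rooted cactus digraph `(G, r)`:
`v ≼ w ↔ C(v) ⊆ C(w)`. -/
def pre (G : DirGraph V) (r v w : V) : Prop :=
  Subgraph.le (C G r v) (C G r w)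

end DirGraph


namespace DirGraph

variable {V : Type}

lemma adj_of_mem_arcs (G : DirGraph V) : ∀ (p : List V), G.IsWalk p → ∀ x y : V, (x, y) ∈ arcs p → G.Adj x y
  | [], h => h.elim
  | [_], _ => by intro x y hm; simp [arcs] at hm
  | a :: b :: l, h => by
      intro x y hm
      simp only [arcs, List.tail_cons, List.zip_cons_cons, List.mem_cons, Prod.mk.injEq] at hm
      rcases hm with ⟨hx, hy⟩ | h2
      · subst hx; subst hy; exact h.1
      · exact adj_of_mem_arcs G (b :: l) h.2 x y h2

lemma arcs_length (p : List V) : (arcs p).length = p.length - 1 := by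
  simp [arcs]

lemma mem_arcs_iff (p : List V) (a : V × V) :
    a ∈ arcs p ↔ ∃ i : ℕ, ∃ h : i + 1 < p.length,
      p[i]'(by omega) = a.1 ∧ p[i+1]'h = a.2 := by
  rw [List.mem_iff_getElem]
  constructor
  · rintro ⟨i, hi, he⟩
    have hi' : i + 1 < p.length := by rw [arcs_length] at hi; omega
    refine ⟨i, hi', ?_, ?_⟩
    · rw [← he]; simp [arcs, List.getElem_zip]
    · rw [← he]; simp [arcs, List.getElem_zip, List.getElem_tail]
  · rintro ⟨i, hi, h1, h2⟩
    refine ⟨i, by rw [arcs_length]; omega, ?_⟩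
    simp [arcs, List.getElem_zip, List.getElem_tail]
    exact Prod.ext h1 h2

lemma head?_eq (p : List V) (h : 0 < p.length) : p.head? = some (p[0]) := by
  rcases p with _ | ⟨a, t⟩
  · simp at h
  · rfl

lemma getLast?_eq (p : List V) (h : 0 < p.length) :
    p.getLast? = some (p[p.length - 1]'(by omega)) := by
  rw [List.getLast?_eq_getLast (by intro he; simp [he] at h), List.getLast_eq_getElem]

lemma cycle_wrap {G : DirGraph V} {p : List V} (hc : G.IsSimpleCycle p) :
    p[0]'(by have := hc.2.1; omega) = p[p.length - 1]'(by have := hc.2.1; omega) := by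
  have h2 := hc.2.1
  have h := hc.2.2.1
  rw [head?_eq p (by omega), getLast?_eq p (by omega)] at h
  exact Option.some_injective _ h

lemma nodup_getElem_eq {G : DirGraph V} {p : List V} (hc : G.IsSimpleCycle p)
    {i j : ℕ} (hi : i < p.length - 1) (hj : j < p.length - 1)
    (he : p[i]'(by omega) = p[j]'(by omega)) : i = j := by
  have hnd := hc.2.2.2
  have hl : p.dropLast.length = p.length - 1 := by simp
  have h1 : p.dropLast[i]'(by omega) = p[i]'(by omega) := List.getElem_dropLast ..
  have h2 : p.dropLast[j]'(by omega) = p[j]'(by omega) := List.getElem_dropLast ..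
  exact (List.Nodup.getElem_inj_iff hnd).1 (by rw [h1, h2]; exact he)

/-- A simple cycle has a unique in-arc at each vertex. -/
lemma in_arc_unique {G : DirGraph V} {p : List V} (hc : G.IsSimpleCycle p)
    {u₁ u₂ x : V} (h1 : (u₁, x) ∈ arcs p) (h2 : (u₂, x) ∈ arcs p) : u₁ = u₂ := by
  have hn := hc.2.1
  rw [mem_arcs_iff] at h1 h2
  obtain ⟨i, hi, hi1, hi2⟩ := h1
  obtain ⟨j, hj, hj1, hj2⟩ := h2
  simp only at hi1 hi2 hj1 hj2
  -- map index k+1 (1 ≤ k+1 ≤ n-1) to (k+1) % (n-1)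
  have key : ∀ k : ℕ, (hk : k + 1 < p.length) →
      p[(k+1) % (p.length - 1)]'(by have := Nat.mod_lt (k+1) (y := p.length -1) (by omega); omega) = p[k+1]'hk := by
    intro k hk
    rcases Nat.lt_or_ge (k+1) (p.length - 1) with h | h
    · simp only [Nat.mod_eq_of_lt h]
    · have hk1 : k + 1 = p.length - 1 := by omega
      have h0 : (k + 1) % (p.length - 1) = 0 := by rw [hk1, Nat.mod_self]
      simp only [hk1, Nat.mod_self]
      exact cycle_wrap hc
  have e1 := key i hi
  have e2 := key j hj
  rw [hi2] at e1; rw [hj2] at e2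
  have hij : (i+1) % (p.length - 1) = (j+1) % (p.length - 1) := by
    apply nodup_getElem_eq hc (Nat.mod_lt _ (by omega)) (Nat.mod_lt _ (by omega))
    rw [e1, e2]
  have : i = j := by
    rcases Nat.lt_or_ge (i+1) (p.length - 1) with h | h <;>
    rcases Nat.lt_or_ge (j+1) (p.length - 1) with h' | h'
    · rw [Nat.mod_eq_of_lt h, Nat.mod_eq_of_lt h'] at hij; omega
    · have : j + 1 = p.length - 1 := by omega
      rw [Nat.mod_eq_of_lt h, this, Nat.mod_self] at hij; omega
    · have : i + 1 = p.length - 1 := by omega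
      rw [Nat.mod_eq_of_lt h', this, Nat.mod_self] at hij; omega
    · omega
  subst this
  rw [← hi1, ← hj1]

/-- A simple cycle has a unique out-arc at each vertex. -/
lemma out_arc_unique {G : DirGraph V} {p : List V} (hc : G.IsSimpleCycle p)
    {w₁ w₂ x : V} (h1 : (x, w₁) ∈ arcs p) (h2 : (x, w₂) ∈ arcs p) : w₁ = w₂ := by
  rw [mem_arcs_iff] at h1 h2
  obtain ⟨i, hi, hi1, hi2⟩ := h1
  obtain ⟨j, hj, hj1, hj2⟩ := h2
  simp only at hi1 hi2 hj1 hj2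
  have : i = j := nodup_getElem_eq hc (by omega) (by omega) (by rw [hi1, hj1])
  subst this
  rw [← hi2, ← hj2]

lemma exists_in_arc {G : DirGraph V} {p : List V} (hc : G.IsSimpleCycle p)
    {x : V} (hx : x ∈ p) : ∃ u, (u, x) ∈ arcs p := by
  have hn := hc.2.1
  rw [List.mem_iff_getElem] at hx
  obtain ⟨i, hi, he⟩ := hx
  rcases Nat.eq_zero_or_pos i with rfl | hpos
  · refine ⟨p[p.length - 2]'(by omega), ?_⟩
    rw [mem_arcs_iff]
    refine ⟨p.length - 2, by omega, rfl, ?_⟩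
    simp only
    have h3 : p.length - 2 + 1 = p.length - 1 := by omega
    refine Eq.trans ?_ he
    simp only [h3]
    exact (cycle_wrap hc).symm
  · refine ⟨p[i-1]'(by omega), ?_⟩
    rw [mem_arcs_iff]
    exact ⟨i - 1, by omega, rfl, by simp only; rw [← he]; congr 1; omega⟩

lemma exists_out_arc {G : DirGraph V} {p : List V} (hc : G.IsSimpleCycle p)
    {x : V} (hx : x ∈ p) : ∃ w, (x, w) ∈ arcs p := by
  have hn := hc.2.1
  rw [List.mem_iff_getElem] at hx
  obtain ⟨i, hi, he⟩ := hx
  rcases Nat.lt_or_ge i (p.length - 1) with h | h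
  · exact ⟨p[i+1]'(by omega), by rw [mem_arcs_iff]; exact ⟨i, by omega, he, rfl⟩⟩
  · have : i = p.length - 1 := by omega
    subst this
    refine ⟨p[1]'(by omega), ?_⟩
    rw [mem_arcs_iff]
    refine ⟨0, by omega, ?_, rfl⟩
    rw [← he]
    exact cycle_wrap hc

lemma mem_of_arc_snd {p : List V} {u x : V} (h : (u, x) ∈ arcs p) : x ∈ p :=
  List.mem_of_mem_tail (List.of_mem_zip h).2

lemma mem_of_arc_fst {p : List V} {u x : V} (h : (u, x) ∈ arcs p) : u ∈ p :=
  (List.of_mem_zip h).1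

lemma inDeg_le_outDeg [Finite V] (G : DirGraph V) (hcac : G.CactusArcCond) (v : V) :
    G.inDeg v ≤ G.outDeg v := by
  have key : ∀ u : {u // G.Adj u v}, ∃ w : {w // G.Adj v w},
      ∃ p, G.IsSimpleCycle p ∧ (u.1, v) ∈ arcs p ∧ (v, w.1) ∈ arcs p := by
    rintro ⟨u, hu⟩
    obtain ⟨⟨p, hp, hmp⟩, _⟩ := hcac u v hu
    obtain ⟨w, hw⟩ := exists_out_arc hp (mem_of_arc_snd hmp)
    exact ⟨⟨w, adj_of_mem_arcs G p hp.1 _ _ hw⟩, p, hp, hmp, hw⟩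
  choose f hf using key
  apply Nat.card_le_card_of_injective f
  intro u1 u2 he
  obtain ⟨p, hp, hp1, hp2⟩ := hf u1
  obtain ⟨q, hq, hq1, hq2⟩ := hf u2
  rw [he] at hp2
  have hequiv := (hcac v (f u2).1 (f u2).2).2 p q hp hp2 hq hq2
  have hm : (u2.1, v) ∈ arcs p := (hequiv _).2 hq1
  exact Subtype.ext (in_arc_unique hp hp1 hm)

lemma outDeg_le_inDeg [Finite V] (G : DirGraph V) (hcac : G.CactusArcCond) (v : V) :
    G.outDeg v ≤ G.inDeg v := by
  have key : ∀ w : {w // G.Adj v w}, ∃ u : {u // G.Adj u v},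
      ∃ p, G.IsSimpleCycle p ∧ (v, w.1) ∈ arcs p ∧ (u.1, v) ∈ arcs p := by
    rintro ⟨w, hw⟩
    obtain ⟨⟨p, hp, hmp⟩, _⟩ := hcac v w hw
    obtain ⟨u, hu⟩ := exists_in_arc hp (mem_of_arc_fst hmp)
    exact ⟨⟨u, adj_of_mem_arcs G p hp.1 _ _ hu⟩, p, hp, hmp, hu⟩
  choose f hf using key
  apply Nat.card_le_card_of_injective f
  intro w1 w2 he
  obtain ⟨p, hp, hp1, hp2⟩ := hf w1
  obtain ⟨q, hq, hq1, hq2⟩ := hf w2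
  rw [he] at hp2
  have hequiv := (hcac (f w2).1 v (f w2).2).2 p q hp hp2 hq hq2
  have hm : (v, w2.1) ∈ arcs p := (hequiv _).2 hq1
  exact Subtype.ext (out_arc_unique hp hp1 hm)

end DirGraph

open DirGraph in
/-- In a cactus digraph, `v` is a connecting point iff `δ⁻(v) = δ⁺(v) ≥ 2`. -/
theorem connectingPoint_iff_degree_ge_two {V : Type} [Finite V]
    (G : DirGraph V) (hG : G.IsCactus) (v : V) :
    G.IsConnectingPoint v ↔ (G.inDeg v = G.outDeg v ∧ 2 ≤ G.inDeg v) := by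
  obtain ⟨hsc, hcac⟩ := hG

  constructor
  · rintro ⟨p, q, hp, hq, hne, hvp, hvq⟩
    refine ⟨le_antisymm (G.inDeg_le_outDeg hcac v) (G.outDeg_le_inDeg hcac v), ?_⟩
    obtain ⟨u1, h1⟩ := exists_in_arc hp hvp
    obtain ⟨u2, h2⟩ := exists_in_arc hq hvq
    have a1 : G.Adj u1 v := adj_of_mem_arcs G p hp.1 _ _ h1
    have a2 : G.Adj u2 v := adj_of_mem_arcs G q hq.1 _ _ h2
    have hne' : u1 ≠ u2 := by
      rintro rfl
      exact hne ((hcac u1 v a1).2 p q hp h1 hq h2)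
    have hnt : Nontrivial {u // G.Adj u v} :=
      ⟨⟨u1, a1⟩, ⟨u2, a2⟩, by simpa using hne'⟩
    have := Finite.one_lt_card_iff_nontrivial.2 hnt
    exact this
  · rintro ⟨_, h2⟩
    have hnt : Nontrivial {u // G.Adj u v} := by
      rw [← Finite.one_lt_card_iff_nontrivial]
      exact h2
    obtain ⟨⟨u1, a1⟩, ⟨u2, a2⟩, hne⟩ := hnt
    obtain ⟨⟨p, hp, hmp⟩, huniq⟩ := hcac u1 v a1
    obtain ⟨⟨q, hq, hmq⟩, _⟩ := hcac u2 v a2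
    refine ⟨p, q, hp, hq, ?_, mem_of_arc_snd hmp, mem_of_arc_snd hmq⟩
    intro heq
    have hm : (u2, v) ∈ arcs p := (heq (u2, v)).2 hmq
    exact (by simpa using hne : u1 ≠ u2) (in_arc_unique hp hmp hm)
end

section
/- If G_1 and G_2 are sub-cactus digraphs of a cactus digraph G, then their intersection G_1 ∩ G_2 is either a sub-cactus digraph of G, a single vertex, or empty. -/
namespace DirGraph

variable {V : Type} {G : DirGraph V}

lemma isWalk_iff : ∀ p : List V, G.IsWalk p ↔ p ≠ [] ∧ p.Chain' G.Adj
  | [] => by simp [IsWalk]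
  | [a] => by simp [IsWalk, List.Chain']
  | a :: b :: l => by
    have h : G.IsWalk (a :: b :: l) = (G.Adj a b ∧ G.IsWalk (b :: l)) := rfl
    rw [h, isWalk_iff (b :: l)]
    simp [List.Chain', List.isChain_cons_cons, and_assoc]

lemma arcs_nil : arcs ([] : List V) = [] := rfl
lemma arcs_single (a : V) : arcs [a] = [] := rfl
lemma arcs_cons_cons (a b : V) (l : List V) :
    arcs (a :: b :: l) = (a, b) :: arcs (b :: l) := rfl

lemma chain'_iff_arcs (R : V → V → Prop) :
    ∀ p : List V, p.Chain' R ↔ ∀ a b : V, (a, b) ∈ arcs p → R a b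
  | [] => by simp [arcs_nil, List.Chain']
  | [a] => by simp [arcs_single, List.Chain']
  | a :: b :: l => by
    rw [show List.Chain' R (a :: b :: l) ↔ R a b ∧ List.Chain' R (b :: l) from List.isChain_cons_cons, chain'_iff_arcs R (b :: l), arcs_cons_cons]
    constructor
    · rintro ⟨h1, h2⟩ x y hm
      rcases List.mem_cons.1 hm with h | h
      · obtain ⟨rfl, rfl⟩ := Prod.mk_inj.1 h; exact h1
      · exact h2 x y h
    · intro h
      exact ⟨h a b List.mem_cons_self, fun x y hm => h x y (List.mem_cons_of_mem _ hm)⟩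

lemma adj_of_mem_arcs_s7 {p : List V} (h : G.IsWalk p) {a b : V} (hm : (a, b) ∈ arcs p) :
    G.Adj a b := (chain'_iff_arcs G.Adj p).1 ((isWalk_iff p).1 h).2 a b hm

lemma isWalk_of_arcs {p : List V} (hne : p ≠ []) (h : ∀ a b : V, (a, b) ∈ arcs p → G.Adj a b) :
    G.IsWalk p := (isWalk_iff p).2 ⟨hne, (chain'_iff_arcs G.Adj p).2 h⟩

lemma mem_dropLast_of_mem_arcs : ∀ {p : List V} {a b : V}, (a, b) ∈ arcs p → a ∈ p.dropLast
  | [], a, b, h => by simp [arcs_nil] at h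
  | [x], a, b, h => by simp [arcs_single] at h
  | x :: y :: l, a, b, h => by
    rw [arcs_cons_cons] at h
    rcases List.mem_cons.1 h with h | h
    · obtain ⟨rfl, rfl⟩ := Prod.mk_inj.1 h
      simp
    · have := mem_dropLast_of_mem_arcs h
      simp only [List.dropLast_cons₂]
      exact List.mem_cons_of_mem _ this

lemma mem_tail_of_mem_arcs : ∀ {p : List V} {a b : V}, (a, b) ∈ arcs p → b ∈ p.tail
  | [], a, b, h => by simp [arcs_nil] at h
  | [x], a, b, h => by simp [arcs_single] at h
  | x :: y :: l, a, b, h => by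
    rw [arcs_cons_cons] at h
    rcases List.mem_cons.1 h with h | h
    · obtain ⟨rfl, rfl⟩ := Prod.mk_inj.1 h
      simp
    · have := mem_tail_of_mem_arcs h
      exact List.mem_cons_of_mem _ this

lemma arcs_glue : ∀ (u : List V) (a : V) (w : List V),
    arcs (u ++ a :: w) = arcs (u ++ [a]) ++ arcs (a :: w)
  | [], a, w => by simp [arcs_single]
  | [c], a, w => by simp [arcs_cons_cons, arcs_single]
  | c :: d :: u, a, w => by
    have ih := arcs_glue (d :: u) a w
    simp only [List.cons_append] at ih ⊢
    rw [arcs_cons_cons, arcs_cons_cons]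
    rw [ih]
    simp

lemma succ_unique {p : List V} (hn : p.Nodup) :
    ∀ {u a b : V}, (u, a) ∈ arcs p → (u, b) ∈ arcs p → a = b := by
  induction p with
  | nil => intro u a b h; simp [arcs_nil] at h
  | cons x t ih =>
    match t with
    | [] => intro u a b h; simp [arcs_single] at h
    | y :: l =>
      intro u a b ha hb
      rw [arcs_cons_cons] at ha hb
      have hx : x ∉ y :: l := (List.nodup_cons.1 hn).1
      rcases List.mem_cons.1 ha with h | h <;> rcases List.mem_cons.1 hb with h' | h'
      · obtain ⟨rfl, rfl⟩ := Prod.mk_inj.1 h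
        obtain ⟨-, rfl⟩ := Prod.mk_inj.1 h'
        rfl
      · obtain ⟨rfl, rfl⟩ := Prod.mk_inj.1 h
        exact absurd (List.mem_of_mem_dropLast (mem_dropLast_of_mem_arcs h')) hx
      · obtain ⟨rfl, rfl⟩ := Prod.mk_inj.1 h'
        exact absurd (List.mem_of_mem_dropLast (mem_dropLast_of_mem_arcs h)) hx
      · exact ih (List.nodup_cons.1 hn).2 h h'

lemma pred_unique {p : List V} (hn : p.Nodup) :
    ∀ {u a b : V}, (a, u) ∈ arcs p → (b, u) ∈ arcs p → a = b := by
  induction p with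
  | nil => intro u a b h; simp [arcs_nil] at h
  | cons x t ih =>
    match t with
    | [] => intro u a b h; simp [arcs_single] at h
    | y :: l =>
      intro u a b ha hb
      rw [arcs_cons_cons] at ha hb
      have hy : y ∉ l := (List.nodup_cons.1 (List.nodup_cons.1 hn).2).1
      rcases List.mem_cons.1 ha with h | h <;> rcases List.mem_cons.1 hb with h' | h'
      · obtain ⟨rfl, rfl⟩ := Prod.mk_inj.1 h
        obtain ⟨rfl, -⟩ := Prod.mk_inj.1 h'
        rfl
      · obtain ⟨rfl, rfl⟩ := Prod.mk_inj.1 h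
        exact absurd (mem_tail_of_mem_arcs h') hy
      · obtain ⟨rfl, rfl⟩ := Prod.mk_inj.1 h'
        exact absurd (mem_tail_of_mem_arcs h) hy
      · exact ih (List.nodup_cons.1 hn).2 h h'

lemma not_arc_to_head {p : List V} (hn : p.Nodup) {x : V} (hh : p.head? = some x) :
    ∀ w : V, (w, x) ∉ arcs p := by
  intro w hw
  obtain ⟨t, rfl⟩ : ∃ t, p = x :: t := by
    cases p with
    | nil => simp at hh
    | cons a t =>
      simp only [List.head?_cons, Option.some_inj] at hh
      exact ⟨t, by rw [hh]⟩
  have := mem_tail_of_mem_arcs hw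
  exact (List.nodup_cons.1 hn).1 this

lemma not_arc_from_last {p : List V} (hn : p.Nodup) {x : V} (hl : p.getLast? = some x) :
    ∀ w : V, (x, w) ∉ arcs p := by
  intro w hw
  have hne : p ≠ [] := by rintro rfl; simp at hl
  have hmem := mem_dropLast_of_mem_arcs hw
  rw [List.getLast?_eq_getLast hne, Option.some_inj] at hl
  have heq : p.dropLast ++ [x] = p := by
    rw [← hl]; exact List.dropLast_append_getLast hne
  have hn' : (p.dropLast ++ [x]).Nodup := by rw [heq]; exact hn
  have hd := List.disjoint_of_nodup_append hn'
  exact hd hmem (by simp)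

lemma mem_of_getLast?' : ∀ {l : List V} {a : V}, l.getLast? = some a → a ∈ l := by
  intro l
  induction l with
  | nil => intro a h; simp at h
  | cons b t ih =>
    intro a h
    cases t with
    | nil =>
      simp only [List.getLast?_singleton, Option.some_inj] at h
      simp [h]
    | cons c l' =>
      rw [List.getLast?_cons_cons] at h
      exact List.mem_cons_of_mem _ (ih h)

lemma getLast?_append_right (l : List V) {r : List V} (h : r ≠ []) :
    (l ++ r).getLast? = r.getLast? := by
  conv_lhs => rw [← List.dropLast_append_getLast h, ← List.append_assoc]
  rw [List.getLast?_concat, List.getLast?_eq_getLast h]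

lemma exists_dup_split : ∀ (l : List V), ¬ l.Nodup →
    ∃ (l₁ : List V) (v : V) (l₂ l₃ : List V), l = l₁ ++ v :: l₂ ++ v :: l₃ := by
  intro l
  induction l with
  | nil => intro h; exact absurd List.nodup_nil h
  | cons a t ih =>
    intro h
    by_cases ha : a ∈ t
    · obtain ⟨l₂, l₃, rfl⟩ := List.append_of_mem ha
      exact ⟨[], a, l₂, l₃, rfl⟩
    · have : ¬ t.Nodup := fun hn => h (List.nodup_cons.2 ⟨ha, hn⟩)
      obtain ⟨l₁, v, l₂, l₃, rfl⟩ := ih this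
      exact ⟨a :: l₁, v, l₂, l₃, rfl⟩

lemma exists_first_split (P : V → Prop) : ∀ (l : List V), (∃ v ∈ l, P v) →
    ∃ (s : List V) (v : V) (t : List V), l = s ++ v :: t ∧ P v ∧ ∀ u ∈ s, ¬ P u := by
  intro l
  induction l with
  | nil => rintro ⟨v, hv, -⟩; simp at hv
  | cons a t ih =>
    rintro ⟨v, hv, hPv⟩
    by_cases hPa : P a
    · exact ⟨[], a, t, rfl, hPa, by simp⟩
    · have hvt : v ∈ t := by
        rcases List.mem_cons.1 hv with rfl | h
        · exact absurd hPv hPa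
        · exact h
      obtain ⟨s, w, t', heq, hPw, hs⟩ := ih ⟨v, hvt, hPv⟩
      exact ⟨a :: s, w, t', by rw [heq]; rfl, hPw, by
        intro u hu
        rcases List.mem_cons.1 hu with rfl | h
        · exact hPa
        · exact hs u h⟩

lemma closed_nodup_eq_singleton {p : List V} (hn : p.Nodup) {x : V}
    (h1 : p.head? = some x) (h2 : p.getLast? = some x) : p = [x] := by
  cases p with
  | nil => simp at h1
  | cons a t =>
    simp only [List.head?_cons, Option.some_inj] at h1
    subst h1
    cases t with
    | nil => rfl
    | cons b l =>
      rw [List.getLast?_cons_cons] at h2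
      have : a ∈ b :: l := mem_of_getLast?' h2
      exact absurd this (List.nodup_cons.1 hn).1

lemma exists_pred_of_mem_tail : ∀ {p : List V} {v : V}, v ∈ p.tail → ∃ w, (w, v) ∈ arcs p := by
  intro p
  induction p with
  | nil => intro v h; simp at h
  | cons a t ih =>
    intro v h
    simp only [List.tail_cons] at h
    cases t with
    | nil => simp at h
    | cons b l =>
      rcases List.mem_cons.1 h with rfl | h'
      · exact ⟨a, by rw [arcs_cons_cons]; exact List.mem_cons_self⟩
      · obtain ⟨w, hw⟩ := ih h'
        exact ⟨w, by rw [arcs_cons_cons]; exact List.mem_cons_of_mem _ hw⟩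

/-- In a closed walk of length ≥ 2, every vertex has an in-arc. -/
lemma exists_in_arc_s7 {p : List V} (hlen : 2 ≤ p.length) (hcl : p.head? = p.getLast?)
    {v : V} (hv : v ∈ p) : ∃ w, (w, v) ∈ arcs p := by
  cases p with
  | nil => simp at hlen
  | cons a t =>
    have ht : t ≠ [] := by
      rintro rfl; simp at hlen
    apply exists_pred_of_mem_tail (p := a :: t)
    simp only [List.tail_cons]
    rcases List.mem_cons.1 hv with hva | h'
    · rw [hva]
      have : (a :: t).getLast? = t.getLast? := by
        cases t with
        | nil => exact absurd rfl ht
        | cons b l => exact List.getLast?_cons_cons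
      rw [this] at hcl
      simp only [List.head?_cons] at hcl
      exact mem_of_getLast?' hcl.symm
    · exact h'

/-- Extract a simple path from a walk. -/
lemma exists_simplePath_of_walk : ∀ (n : ℕ) (p : List V), p.length ≤ n → G.IsWalk p →
    ∀ x y : V, p.head? = some x → p.getLast? = some y →
    ∃ q, G.IsWalk q ∧ q.Nodup ∧ q.head? = some x ∧ q.getLast? = some y ∧ ∀ v ∈ q, v ∈ p := by
  intro n
  induction n with
  | zero =>
    intro p hl hw x y hx hy
    interval_cases h : p.length
    · rw [List.length_eq_zero_iff] at h; subst h; simp at hx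
  | succ m ih =>
    intro p hl hw x y hx hy
    cases p with
    | nil => simp at hx
    | cons a t =>
      simp only [List.head?_cons, Option.some_inj] at hx
      subst hx
      by_cases hat : a ∈ t
      · obtain ⟨t₁, t₂, rfl⟩ := List.append_of_mem hat
        -- recurse on a :: t₂, a suffix of p
        have hsuf : a :: (t₁ ++ a :: t₂) = (a :: t₁) ++ (a :: t₂) := rfl
        have hwalk : G.IsWalk (a :: t₂) := by
          refine isWalk_of_arcs (by simp) ?_
          intro u w hm
          apply adj_of_mem_arcs_s7 hw
          rw [hsuf, arcs_glue (a :: t₁) a t₂]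
          exact List.mem_append_right _ hm
        have hlast : (a :: t₂).getLast? = some y := by
          rw [hsuf] at hy
          rwa [getLast?_append_right (a :: t₁) (by simp : (a :: t₂) ≠ [])] at hy
        have hlen : (a :: t₂).length ≤ m := by
          have := hl
          simp only [List.length_cons, List.length_append] at this ⊢
          omega
        obtain ⟨q, h1, h2, h3, h4, h5⟩ := ih (a :: t₂) hlen hwalk a y rfl hlast
        exact ⟨q, h1, h2, h3, h4, fun v hv => by
          have := h5 v hv
          rw [hsuf]
          exact List.mem_append_right _ this⟩
      · cases t with
        | nil =>
          refine ⟨[a], by trivial, List.nodup_singleton a, rfl, ?_, by simp⟩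
          simpa using hy
        | cons b l =>
          have hwt : G.IsWalk (b :: l) := hw.2
          have hlt : (b :: l).getLast? = some y := by
            rwa [List.getLast?_cons_cons] at hy
          have hlen : (b :: l).length ≤ m := by
            simp only [List.length_cons] at hl ⊢; omega
          obtain ⟨q, h1, h2, h3, h4, h5⟩ := ih (b :: l) hlen hwt b y rfl hlt
          cases q with
          | nil => simp at h3
          | cons c q' =>
            simp only [List.head?_cons, Option.some_inj] at h3
            subst h3
            refine ⟨a :: c :: q', ⟨hw.1, h1⟩, ?_, rfl, ?_, ?_⟩
            · exact List.nodup_cons.2 ⟨fun hc => hat (h5 a hc), h2⟩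
            · rwa [List.getLast?_cons_cons]
            · intro v hv
              rcases List.mem_cons.1 hv with rfl | h'
              · exact List.mem_cons_self
              · exact List.mem_cons_of_mem _ (h5 v h')

/-- Every arc of a closed walk lies on a simple cycle whose arcs are among the walk's arcs. -/
lemma exists_cycle_of_closedWalk : ∀ (n : ℕ) (p : List V), p.length ≤ n → G.IsWalk p →
    p.head? = p.getLast? → 2 ≤ p.length →
    ∀ s t : V, (s, t) ∈ arcs p →
    ∃ c, G.IsSimpleCycle c ∧ (s, t) ∈ arcs c ∧ ∀ a ∈ arcs c, a ∈ arcs p := by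
  intro n
  induction n with
  | zero =>
    intro p hl hw hcl hlen s t hm; omega
  | succ m ih =>
    intro p hl hw hcl hlen s t hm
    by_cases hnd : p.dropLast.Nodup
    · exact ⟨p, ⟨hw, hlen, hcl, hnd⟩, hm, fun a ha => ha⟩
    · -- decompose p
      cases p with
      | nil => simp at hlen
      | cons x u =>
        have hu : u ≠ [] := by rintro rfl; simp at hlen
        -- p = (x :: m₀) ++ [x]
        obtain ⟨m₀, hm₀⟩ : ∃ m₀, u = m₀ ++ [x] := by
          refine ⟨u.dropLast, ?_⟩
          have h1 : (x :: u).getLast? = u.getLast? := by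
            cases u with
            | nil => exact absurd rfl hu
            | cons b l => exact List.getLast?_cons_cons
          rw [h1] at hcl
          simp only [List.head?_cons] at hcl
          rw [List.getLast?_eq_getLast hu, Option.some_inj] at hcl
          rw [hcl]
          exact (List.dropLast_append_getLast hu).symm
        subst hm₀
        rw [show (x :: (m₀ ++ [x])) = (x :: m₀) ++ [x] from rfl, List.dropLast_concat] at hnd
        obtain ⟨l₁, v, l₂, l₃, hsplit⟩ := exists_dup_split (x :: m₀) hnd
        have hp : x :: (m₀ ++ [x]) = l₁ ++ v :: (l₂ ++ v :: (l₃ ++ [x])) := by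
          rw [show x :: (m₀ ++ [x]) = (x :: m₀) ++ [x] from rfl, hsplit]
          simp
        -- arcs decomposition
        have harcs : arcs (x :: (m₀ ++ [x])) =
            arcs (l₁ ++ [v]) ++ (arcs ((v :: l₂) ++ [v]) ++ arcs (v :: (l₃ ++ [x]))) := by
          rw [hp, arcs_glue l₁ v (l₂ ++ v :: (l₃ ++ [x]))]
          congr 1
          rw [show (v :: (l₂ ++ v :: (l₃ ++ [x]))) = (v :: l₂) ++ v :: (l₃ ++ [x]) from rfl,
            arcs_glue (v :: l₂) v (l₃ ++ [x])]
        set q₂ : List V := (v :: l₂) ++ [v] with hq₂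
        set q₁ : List V := l₁ ++ v :: (l₃ ++ [x]) with hq₁
        have harcs1 : arcs q₁ = arcs (l₁ ++ [v]) ++ arcs (v :: (l₃ ++ [x])) :=
          arcs_glue l₁ v (l₃ ++ [x])
        have hsub2 : ∀ a ∈ arcs q₂, a ∈ arcs (x :: (m₀ ++ [x])) := by
          intro a ha; rw [harcs]
          exact List.mem_append_right _ (List.mem_append_left _ ha)
        have hsub1 : ∀ a ∈ arcs q₁, a ∈ arcs (x :: (m₀ ++ [x])) := by
          intro a ha; rw [harcs1] at ha; rw [harcs]
          rcases List.mem_append.1 ha with h | h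
          · exact List.mem_append_left _ h
          · exact List.mem_append_right _ (List.mem_append_right _ h)
        have hwalk2 : G.IsWalk q₂ :=
          isWalk_of_arcs (by simp [hq₂]) fun a b hab => adj_of_mem_arcs_s7 hw (hsub2 (a,b) hab)
        have hwalk1 : G.IsWalk q₁ :=
          isWalk_of_arcs (by simp [hq₁]) fun a b hab => adj_of_mem_arcs_s7 hw (hsub1 (a,b) hab)
        have hcl2 : q₂.head? = q₂.getLast? := by
          rw [hq₂, List.getLast?_concat]; simp
        have hcl1 : q₁.head? = q₁.getLast? := by
          have h1 : q₁.getLast? = some x := by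
            rw [hq₁, show l₁ ++ v :: (l₃ ++ [x]) = (l₁ ++ v :: l₃) ++ [x] by simp,
              List.getLast?_concat]
          rw [h1, hq₁]
          have h2 : (x :: (m₀ ++ [x])).head? = some x := rfl
          rw [hp] at h2
          cases l₁ with
          | nil => simpa using h2
          | cons c l' => simpa using h2
        have hlen2 : 2 ≤ q₂.length := by simp [hq₂]; try omega
        have hlen1 : 2 ≤ q₁.length := by simp [hq₁]; try omega
        have hplen : (x :: (m₀ ++ [x])).length = l₁.length + l₂.length + l₃.length + 3 := by
          rw [hp]; simp; try omega
        have hlt2 : q₂.length ≤ m := by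
          have := hl; rw [hplen] at this; simp [hq₂]; try omega
        have hlt1 : q₁.length ≤ m := by
          have := hl; rw [hplen] at this; simp [hq₁]; try omega
        -- where is the arc (s,t)?
        rw [harcs] at hm
        rcases List.mem_append.1 hm with h | h'
        · have hmem : (s, t) ∈ arcs q₁ := by rw [harcs1]; exact List.mem_append_left _ h
          obtain ⟨c, hc1, hc2, hc3⟩ := ih q₁ hlt1 hwalk1 hcl1 hlen1 s t hmem
          exact ⟨c, hc1, hc2, fun a ha => hsub1 a (hc3 a ha)⟩
        · rcases List.mem_append.1 h' with h | h
          · obtain ⟨c, hc1, hc2, hc3⟩ := ih q₂ hlt2 hwalk2 hcl2 hlen2 s t h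
            exact ⟨c, hc1, hc2, fun a ha => hsub2 a (hc3 a ha)⟩
          · have hmem : (s, t) ∈ arcs q₁ := by rw [harcs1]; exact List.mem_append_right _ h
            obtain ⟨c, hc1, hc2, hc3⟩ := ih q₁ hlt1 hwalk1 hcl1 hlen1 s t hmem
            exact ⟨c, hc1, hc2, fun a ha => hsub1 a (hc3 a ha)⟩

lemma head_arc {l : List V} {a : V} (h : l.head? = some a) (x : V) : (x, a) ∈ arcs (x :: l) := by
  cases l with
  | nil => simp at h
  | cons c l' =>
    simp only [List.head?_cons, Option.some_inj] at h
    subst h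
    rw [arcs_cons_cons]
    exact List.mem_cons_self

/-- Uniqueness of simple paths in a cactus digraph. -/
lemma path_unique (hSC : G.StronglyConnected) (hCA : G.CactusArcCond) :
    ∀ (n : ℕ) (P Q : List V), P.length + Q.length ≤ n →
    G.IsSimplePath P → G.IsSimplePath Q →
    P.head? = Q.head? → P.getLast? = Q.getLast? → P = Q := by
  intro n
  induction n with
  | zero =>
    intro P Q hl hP hQ hh hlast
    have := ((isWalk_iff P).1 hP.1).1
    have : 0 < P.length := List.length_pos_iff.2 this
    omega
  | succ m ih =>
    intro P Q hl hP hQ hh hlast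
    cases P with
    | nil => exact absurd ((isWalk_iff _).1 hP.1).1 (by simp)
    | cons x P' =>
      cases Q with
      | nil => exact absurd ((isWalk_iff _).1 hQ.1).1 (by simp)
      | cons x' Q' =>
        simp only [List.head?_cons, Option.some_inj] at hh
        subst hh
        cases P' with
        | nil =>
          have h1 : (x :: Q').getLast? = some x := by rw [← hlast]; rfl
          rw [closed_nodup_eq_singleton hQ.2 rfl h1]
        | cons a P'' =>
          cases Q' with
          | nil =>
            have h1 : (x :: a :: P'').getLast? = some x := by rw [hlast]; rfl
            rw [closed_nodup_eq_singleton hP.2 rfl h1]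
          | cons b Q'' =>
            by_cases hab : a = b
            · subst hab
              have hPw : G.IsWalk (a :: P'') := hP.1.2
              have hQw : G.IsWalk (a :: Q'') := hQ.1.2
              have hPn : (a :: P'').Nodup := (List.nodup_cons.1 hP.2).2
              have hQn : (a :: Q'').Nodup := (List.nodup_cons.1 hQ.2).2
              have hlast' : (a :: P'').getLast? = (a :: Q'').getLast? := by
                have h1 : (x :: a :: P'').getLast? = (a :: P'').getLast? :=
                  List.getLast?_cons_cons
                have h2 : (x :: a :: Q'').getLast? = (a :: Q'').getLast? :=
                  List.getLast?_cons_cons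
                rw [← h1, ← h2, hlast]
              have := ih (a :: P'') (a :: Q'') (by simp at hl ⊢; omega)
                ⟨hPw, hPn⟩ ⟨hQw, hQn⟩ rfl hlast'
              rw [this]
            · exfalso
              -- the divergence argument
              set P : List V := x :: a :: P'' with hPdef
              set Q : List V := x :: b :: Q'' with hQdef
              have hPne : P ≠ [] := by simp [hPdef]
              have hQne : Q ≠ [] := by simp [hQdef]
              obtain ⟨y, hylast⟩ : ∃ y, P.getLast? = some y :=
                ⟨P.getLast hPne, List.getLast?_eq_getLast hPne⟩
              have hxy : x ≠ y := by
                intro h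
                subst h
                have := closed_nodup_eq_singleton hP.2 rfl hylast
                simp [hPdef] at this
              -- P = (x :: s) ++ [y]
              have hP'ne : (a :: P'') ≠ [] := by simp
              have hylastP' : (a :: P'').getLast? = some y := by
                have h1 : (x :: a :: P'').getLast? = (a :: P'').getLast? :=
                  List.getLast?_cons_cons
                rw [← h1]; exact hylast
              obtain ⟨sP, hPform⟩ : ∃ sP, P = (x :: sP) ++ [y] := by
                refine ⟨(a :: P'').dropLast, ?_⟩
                rw [List.getLast?_eq_getLast hP'ne, Option.some_inj] at hylastP'
                have h2 := List.dropLast_append_getLast hP'ne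
                rw [hylastP'] at h2
                rw [hPdef, List.cons_append, h2]
              have hQ'ne : (b :: Q'') ≠ [] := by simp
              have hylastQ' : (b :: Q'').getLast? = some y := by
                have h1 : (x :: b :: Q'').getLast? = (b :: Q'').getLast? :=
                  List.getLast?_cons_cons
                rw [← h1, ← hlast]; exact hylast
              obtain ⟨sQ, hQform⟩ : ∃ sQ, Q = (x :: sQ) ++ [y] := by
                refine ⟨(b :: Q'').dropLast, ?_⟩
                rw [List.getLast?_eq_getLast hQ'ne, Option.some_inj] at hylastQ'
                have h2 := List.dropLast_append_getLast hQ'ne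
                rw [hylastQ'] at h2
                rw [hQdef, List.cons_append, h2]
              -- return path R : y → x
              obtain ⟨r, hr⟩ := hSC y x
              obtain ⟨R, hRwalk, hRnodup, hRhead, hRlast, -⟩ :=
                exists_simplePath_of_walk r.length r le_rfl hr.1 y x hr.2.1 hr.2.2
              obtain ⟨R₂, hRform⟩ : ∃ R₂, R = y :: R₂ := by
                cases R with
                | nil => simp at hRhead
                | cons c R₂ =>
                  simp only [List.head?_cons, Option.some_inj] at hRhead
                  exact ⟨R₂, by rw [hRhead]⟩
              have hR₂ne : R₂ ≠ [] := by
                rintro rfl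
                rw [hRform] at hRlast
                simp at hRlast
                exact hxy hRlast.symm
              -- the closed walks
              have hRne : R ≠ [] := by rw [hRform]; simp
              have harcsP : arcs ((x :: sP) ++ (y :: R₂)) = arcs P ++ arcs R := by
                rw [arcs_glue (x :: sP) y R₂, ← hPform, ← hRform]
              have harcsQ : arcs ((x :: sQ) ++ (y :: R₂)) = arcs Q ++ arcs R := by
                rw [arcs_glue (x :: sQ) y R₂, ← hQform, ← hRform]
              set W1 : List V := (x :: sP) ++ (y :: R₂) with hW1def
              set W2 : List V := (x :: sQ) ++ (y :: R₂) with hW2def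
              have hW1walk : G.IsWalk W1 := by
                refine isWalk_of_arcs (by simp [hW1def]) ?_
                intro u w h
                rw [hW1def, harcsP] at h
                rcases List.mem_append.1 h with h | h
                · exact adj_of_mem_arcs_s7 hP.1 h
                · exact adj_of_mem_arcs_s7 hRwalk h
              have hW2walk : G.IsWalk W2 := by
                refine isWalk_of_arcs (by simp [hW2def]) ?_
                intro u w h
                rw [hW2def, harcsQ] at h
                rcases List.mem_append.1 h with h | h
                · exact adj_of_mem_arcs_s7 hQ.1 h
                · exact adj_of_mem_arcs_s7 hRwalk h
              have hW1closed : W1.head? = W1.getLast? := by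
                have h1 : W1.getLast? = some x := by
                  rw [show W1 = (x :: sP) ++ R by rw [hW1def, hRform],
                    getLast?_append_right _ hRne]
                  exact hRlast
                rw [h1, hW1def]
                rfl
              have hW2closed : W2.head? = W2.getLast? := by
                have h1 : W2.getLast? = some x := by
                  rw [show W2 = (x :: sQ) ++ R by rw [hW2def, hRform],
                    getLast?_append_right _ hRne]
                  exact hRlast
                rw [h1, hW2def]
                rfl
              have hW1len : 2 ≤ W1.length := by rw [hW1def]; simp; try omega
              have hW2len : 2 ≤ W2.length := by rw [hW2def]; simp; try omega
              have hxa : (x, a) ∈ arcs P :=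
                head_arc (l := a :: P'') (List.head?_cons) x
              have hxb : (x, b) ∈ arcs Q :=
                head_arc (l := b :: Q'') (List.head?_cons) x
              have hxaW1 : (x, a) ∈ arcs W1 := by
                rw [hW1def, harcsP]; exact List.mem_append_left _ hxa
              have hxbW2 : (x, b) ∈ arcs W2 := by
                rw [hW2def, harcsQ]; exact List.mem_append_left _ hxb
              obtain ⟨C, hCcyc, hCxa, hCsub⟩ :=
                exists_cycle_of_closedWalk W1.length W1 le_rfl hW1walk hW1closed hW1len x a hxaW1
              obtain ⟨D, hDcyc, hDxb, hDsub⟩ :=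
                exists_cycle_of_closedWalk W2.length W2 le_rfl hW2walk hW2closed hW2len x b hxbW2
              have hxC : x ∈ C := List.mem_of_mem_dropLast (mem_dropLast_of_mem_arcs hCxa)
              have hxD : x ∈ D := List.mem_of_mem_dropLast (mem_dropLast_of_mem_arcs hDxb)
              obtain ⟨w, hwC⟩ := exists_in_arc_s7 hCcyc.2.1 hCcyc.2.2.1 hxC
              obtain ⟨w', hw'D⟩ := exists_in_arc_s7 hDcyc.2.1 hDcyc.2.2.1 hxD
              have hwR : (w, x) ∈ arcs R := by
                have h := hCsub _ hwC
                rw [hW1def, harcsP] at h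
                rcases List.mem_append.1 h with h | h
                · exact absurd h (not_arc_to_head hP.2 rfl w)
                · exact h
              have hw'R : (w', x) ∈ arcs R := by
                have h := hDsub _ hw'D
                rw [hW2def, harcsQ] at h
                rcases List.mem_append.1 h with h | h
                · exact absurd h (not_arc_to_head hQ.2 rfl w')
                · exact h
              have hww' : w' = w := pred_unique hRnodup hw'R hwR
              subst hww'
              have hadj : G.Adj w' x := adj_of_mem_arcs_s7 hRwalk hwR
              have hequiv := (hCA w' x hadj).2 C D hCcyc hwC hDcyc hw'D
              have hxaD : (x, a) ∈ arcs D := (hequiv (x, a)).1 hCxa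
              have h := hDsub _ hxaD
              rw [hW2def, harcsQ] at h
              rcases List.mem_append.1 h with h | h
              · exact hab (succ_unique hQ.2 h hxb)
              · exact not_arc_from_last hRnodup hRlast a h

lemma walk_mono {G₁ G₂ : DirGraph V} (himp : ∀ a b, G₁.Adj a b → G₂.Adj a b)
    {p : List V} (hw : G₁.IsWalk p) : G₂.IsWalk p :=
  isWalk_of_arcs ((isWalk_iff p).1 hw).1 fun a b hm => himp a b (adj_of_mem_arcs_s7 hw hm)

lemma cactus_cycle_closed {G : DirGraph V} (hCA : G.CactusArcCond) {H : Subgraph G}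
    (hH : H.IsCactus) {x y : V} (hxy : H.Adj x y) {c : List V} (hc : G.IsSimpleCycle c)
    (hm : (x, y) ∈ arcs c) : ∀ a ∈ arcs c, H.Adj a.1 a.2 := by
  obtain ⟨p, hp, hpm⟩ := (hH.2.2 x y hxy).1
  have hpG : G.IsSimpleCycle p :=
    ⟨walk_mono (fun a b h => H.adj_sub h) hp.1, hp.2.1, hp.2.2.1, hp.2.2.2⟩
  have hequiv := (hCA x y (H.adj_sub hxy)).2 c p hc hm hpG hpm
  intro a ha
  have hmem : a ∈ arcs p := (hequiv a).1 ha
  exact adj_of_mem_arcs_s7 (G := H.toDirGraph) hp.1 hmem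

end DirGraph

/-- The intersection of two sub-cactus digraphs of a cactus digraph is a
sub-cactus digraph, a single vertex, or empty. -/
theorem inter_subcactus {V : Type} (G : DirGraph V) (hG : G.IsCactus)
    (H K : DirGraph.Subgraph G) (hH : H.IsCactus) (hK : K.IsCactus) :
    (H.inter K).IsCactus ∨
    (∃ v, (H.inter K).verts = {v} ∧ ∀ x y, ¬ (H.inter K).Adj x y) ∨
    (H.inter K).verts = ∅ := by
  classical
  by_cases hne : (H.inter K).verts.Nonempty
  · left
    obtain ⟨hSC, hCA⟩ := hG
    refine ⟨hne, ?_, ?_⟩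
    · intro x hx y hy
      by_cases hxy : x = y
      · subst hxy
        exact ⟨[x], trivial, rfl, rfl⟩
      · obtain ⟨pH, hpHw, hpHh, hpHl⟩ := hH.2.1 x hx.1 y hy.1
        obtain ⟨qH, hqHw, hqHn, hqHh, hqHl, -⟩ :=
          DirGraph.exists_simplePath_of_walk (G := H.toDirGraph) pH.length pH le_rfl hpHw x y
            hpHh hpHl
        obtain ⟨pK, hpKw, hpKh, hpKl⟩ := hK.2.1 x hx.2 y hy.2
        obtain ⟨qK, hqKw, hqKn, hqKh, hqKl, -⟩ :=
          DirGraph.exists_simplePath_of_walk (G := K.toDirGraph) pK.length pK le_rfl hpKw x y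
            hpKh hpKl
        have hqHG : G.IsWalk qH :=
          DirGraph.walk_mono (fun a b h => H.adj_sub h) hqHw
        have hqKG : G.IsWalk qK :=
          DirGraph.walk_mono (fun a b h => K.adj_sub h) hqKw
        have heq : qH = qK :=
          DirGraph.path_unique hSC hCA (qH.length + qK.length) qH qK le_rfl
            ⟨hqHG, hqHn⟩ ⟨hqKG, hqKn⟩ (hqHh.trans hqKh.symm) (hqHl.trans hqKl.symm)
        refine ⟨qH, ?_, hqHh, hqHl⟩
        refine DirGraph.isWalk_of_arcs ((DirGraph.isWalk_iff _).1 hqHw).1 ?_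
        intro u w hm
        exact ⟨DirGraph.adj_of_mem_arcs_s7 hqHw hm,
          DirGraph.adj_of_mem_arcs_s7 hqKw (heq ▸ hm)⟩
    · intro u w huw
      have hGuw : G.Adj u w := H.adj_sub huw.1
      constructor
      · obtain ⟨c, hc, hmc⟩ := (hCA u w hGuw).1
        have hHarcs := DirGraph.cactus_cycle_closed hCA hH huw.1 hc hmc
        have hKarcs := DirGraph.cactus_cycle_closed hCA hK huw.2 hc hmc
        refine ⟨c, ⟨?_, hc.2.1, hc.2.2.1, hc.2.2.2⟩, hmc⟩
        exact DirGraph.isWalk_of_arcs ((DirGraph.isWalk_iff _).1 hc.1).1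
          (fun p q hm => ⟨hHarcs (p, q) hm, hKarcs (p, q) hm⟩)
      · intro p q hp hmp hq hmq
        have hpG : G.IsSimpleCycle p :=
          ⟨DirGraph.walk_mono (fun a b h => (H.inter K).adj_sub h) hp.1,
            hp.2.1, hp.2.2.1, hp.2.2.2⟩
        have hqG : G.IsSimpleCycle q :=
          ⟨DirGraph.walk_mono (fun a b h => (H.inter K).adj_sub h) hq.1,
            hq.2.1, hq.2.2.1, hq.2.2.2⟩
        exact (hCA u w hGuw).2 p q hpG hmp hqG hmq
  · right; right
    exact Set.not_nonempty_iff_eq_empty.1 hne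
end
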